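/- (Approximate first welfare theorem for Nash social welfare) Let R = (R_i)_{i∈Ā} be a local optimum (i.e., an ε̄-local optimum with ε̄ = 0) with respect to the endowed valuations v̄_i, and let S = (S_i)_{i∈Ā} be a partition of J maximizing ∏_{i∈Ā} v̄_i(S_i)^{w_i} over all partitions of J among the agents of Ā. Then ∏_{i∈Ā} v̄_i(R_i)^{w_i} ≥ (1/e) · ∏_{i∈Ā} v̄_i(S_i)^{w_i}. -/

import Mathlib

open Finset

section Aux
variable {J : Type*} [DecidableEq J] (v : Finset J → ℝ)
  (hsub : ∀ S T : Finset J, v (S ∩ T) + v (S ∪ T) ≤ v S + v T)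

include hsub in
lemma aux_sum_erase : ∀ T : Finset J, ∑ j ∈ T, (v T - v (T.erase j)) ≤ v T - v ∅ := by
  intro T
  induction T using Finset.induction_on with
  | empty => simp
  | @insert a T' ha ih =>
    rw [Finset.sum_insert ha]
    have h1 : (insert a T').erase a = T' := Finset.erase_insert ha
    have h2 : ∀ j ∈ T', v (insert a T') - v ((insert a T').erase j)
        ≤ v T' - v (T'.erase j) := by
      intro j hj
      have hja : j ≠ a := by rintro rfl; exact ha hj
      have e1 : T' ∩ insert a (T'.erase j) = T'.erase j := by
        ext x; simp [Finset.mem_erase, Finset.mem_insert]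
        constructor
        · rintro ⟨hx, hx2 | hx2⟩
          · exact absurd hx (by simp [hx2, ha])
          · exact hx2
        · rintro ⟨hx1, hx2⟩; exact ⟨hx2, Or.inr ⟨hx1, hx2⟩⟩
      have e2 : T' ∪ insert a (T'.erase j) = insert a T' := by
        ext x; simp [Finset.mem_erase, Finset.mem_insert]; tauto
      have e3 : (insert a T').erase j = insert a (T'.erase j) := by
        rw [Finset.erase_insert_of_ne hja.symm]
      have := hsub T' (insert a (T'.erase j))
      rw [e1, e2] at this
      rw [e3]; linarith
    calc (v (insert a T') - v ((insert a T').erase a))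
          + ∑ j ∈ T', (v (insert a T') - v ((insert a T').erase j))
        ≤ (v (insert a T') - v T') + ∑ j ∈ T', (v T' - v (T'.erase j)) := by
          rw [h1]; exact add_le_add le_rfl (Finset.sum_le_sum h2)
      _ ≤ (v (insert a T') - v T') + (v T' - v ∅) := add_le_add le_rfl ih
      _ = v (insert a T') - v ∅ := by ring

include hsub in
lemma aux_union_sum (R : Finset J) :
    ∀ S : Finset J, v (R ∪ S) - v R ≤ ∑ j ∈ S, (v (R ∪ {j}) - v R) := by
  intro S
  induction S using Finset.induction_on with
  | empty => simp
  | @insert a S' ha ih =>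
    rw [Finset.sum_insert ha]
    have e1 : (R ∪ {a}) ∩ (R ∪ S') = R := by
      rw [← Finset.union_inter_distrib_left]
      have : {a} ∩ S' = ∅ := by
        rw [Finset.singleton_inter_of_notMem ha]
      rw [this, Finset.union_empty]
    have e2 : (R ∪ {a}) ∪ (R ∪ S') = R ∪ insert a S' := by
      ext x; simp [Finset.mem_insert]
    have := hsub (R ∪ {a}) (R ∪ S')
    rw [e1, e2] at this
    linarith

include hsub in
lemma aux_subadd : ∀ T : Finset J, v T ≤ v ∅ + ∑ j ∈ T, (v {j} - v ∅) := by
  intro T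
  induction T using Finset.induction_on with
  | empty => simp
  | @insert a T' ha ih =>
    rw [Finset.sum_insert ha]
    have e1 : T' ∩ {a} = ∅ := Finset.inter_singleton_of_notMem ha
    have e2 : T' ∪ {a} = insert a T' := by ext x; simp [Finset.mem_insert]
    have := hsub T' {a}
    rw [e1, e2] at this
    linarith

end Aux

lemma aux_prod_one_add {J : Type*} [DecidableEq J] (S : Finset J) (f : J → ℝ)
    (hf : ∀ j ∈ S, 0 ≤ f j) : 1 + ∑ j ∈ S, f j ≤ ∏ j ∈ S, (1 + f j) := by
  induction S using Finset.induction_on with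
  | empty => simp
  | @insert a S' ha ih =>
    rw [Finset.sum_insert ha, Finset.prod_insert ha]
    have hfa : 0 ≤ f a := hf a (Finset.mem_insert_self a S')
    have hsum : 0 ≤ ∑ j ∈ S', f j :=
      Finset.sum_nonneg fun j hj => hf j (Finset.mem_insert_of_mem hj)
    have ih' := ih fun j hj => hf j (Finset.mem_insert_of_mem hj)
    nlinarith

/-- (Approximate first welfare theorem for Nash social welfare.)
Let `R` be a (0-)local optimum with respect to the endowed valuations `v̄_i`, and let
`S` be a partition of `J` maximizing `∏ v̄_i(S_i)^{w_i}` over all partitions of `J`.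
Then `∏ v̄_i(R_i)^{w_i} ≥ (1/e) · ∏ v̄_i(S_i)^{w_i}`. -/
theorem first_welfare_theorem_NSW {J A : Type*} [Fintype J] [DecidableEq J]
    [Fintype A] [DecidableEq A] [Nonempty A]
    (w : A → ℝ) (hw : ∀ i, 0 < w i) (hwsum : ∑ i, w i ≤ 1)
    (v : A → Finset J → ℝ)
    (hmono : ∀ i, ∀ S T : Finset J, S ⊆ T → v i S ≤ v i T)
    (hsubmod : ∀ i, ∀ S T : Finset J, v i (S ∩ T) + v i (S ∪ T) ≤ v i S + v i T)
    (hv0 : ∀ i, v i ∅ = 0) (hvJ : ∀ i, 0 < v i (univ : Finset J))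
    (ℓ : A → J) (hℓ : ∀ i, ∀ j : J, v i {j} ≤ v i {ℓ i})
    (vb : A → Finset J → ℝ) (hvb : ∀ i S, vb i S = v i {ℓ i} + v i S)
    (R : A → Finset J)
    (hRdisj : ∀ i k, i ≠ k → Disjoint (R i) (R k))
    (hRcover : Finset.univ.biUnion R = (univ : Finset J))
    (hloc : ∀ i k, i ≠ k → ∀ j ∈ R i,
      (vb i ((R i).erase j) / vb i (R i)) ^ (w i) *
        (vb k (R k ∪ {j}) / vb k (R k)) ^ (w k) ≤ 1)
    (S : A → Finset J)
    (hSdisj : ∀ i k, i ≠ k → Disjoint (S i) (S k))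
    (hScover : Finset.univ.biUnion S = (univ : Finset J))
    (hSopt : ∀ S' : A → Finset J, (∀ i k, i ≠ k → Disjoint (S' i) (S' k)) →
      Finset.univ.biUnion S' = (univ : Finset J) →
      ∏ i, vb i (S' i) ^ (w i) ≤ ∏ i, vb i (S i) ^ (w i)) :
    (1 / Real.exp 1) * ∏ i, vb i (S i) ^ (w i) ≤ ∏ i, vb i (R i) ^ (w i) := by
  -- basic positivity facts
  have hvnn : ∀ i (T : Finset J), 0 ≤ v i T := fun i T => by
    have := hmono i ∅ T (Finset.empty_subset T); rw [hv0 i] at this; exact this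
  have hℓpos : ∀ i, 0 < v i {ℓ i} := by
    intro i
    by_contra h
    push_neg at h
    have h1 := aux_subadd (v i) (hsubmod i) (univ : Finset J)
    have h2 : ∑ j : J, (v i {j} - v i ∅) ≤ 0 := by
      apply Finset.sum_nonpos
      intro j _
      have := hℓ i j
      rw [hv0 i]
      linarith
    simp only [hv0 i, sub_zero, zero_add] at h1 h2
    have := hvJ i
    linarith
  have hpos : ∀ i (T : Finset J), 0 < vb i T := fun i T => by
    rw [hvb]; exact add_pos_of_pos_of_nonneg (hℓpos i) (hvnn i T)
  -- removal bound: per-agent sum of log-losses is at most 1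
  have hrem : ∀ i, ∑ j ∈ R i, Real.log (vb i (R i) / vb i ((R i).erase j)) ≤ 1 := by
    intro i
    set m : ℝ := max (v i {ℓ i}) (v i (R i)) with hm
    have hmpos : 0 < m := lt_of_lt_of_le (hℓpos i) (le_max_left _ _)
    have hb : ∀ j ∈ R i, m ≤ vb i ((R i).erase j) := by
      intro j hj
      have h1 : v i {ℓ i} ≤ vb i ((R i).erase j) := by
        rw [hvb]; have := hvnn i ((R i).erase j); linarith
      have h2 : v i (R i) ≤ vb i ((R i).erase j) := by
        have e1 : {j} ∩ (R i).erase j = ∅ := by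
          ext x; simp (config := {contextual := true}) [Finset.mem_erase]
        have e2 : {j} ∪ (R i).erase j = R i := by
          rw [← Finset.insert_eq, Finset.insert_erase hj]
        have := hsubmod i {j} ((R i).erase j)
        rw [e1, e2, hv0 i] at this
        have hjl := hℓ i j
        rw [hvb]
        linarith
      exact max_le h1 h2
    have hstep : ∀ j ∈ R i, Real.log (vb i (R i) / vb i ((R i).erase j))
        ≤ (vb i (R i) - vb i ((R i).erase j)) / m := by
      intro j hj
      have hbj := hb j hj
      have hbpos := hpos i ((R i).erase j)
      have habove : vb i ((R i).erase j) ≤ vb i (R i) := by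
        rw [hvb, hvb]
        have := hmono i ((R i).erase j) (R i) (Finset.erase_subset j (R i))
        linarith
      have hlog : Real.log (vb i (R i) / vb i ((R i).erase j))
          ≤ vb i (R i) / vb i ((R i).erase j) - 1 :=
        Real.log_le_sub_one_of_pos (div_pos (hpos i (R i)) hbpos)
      have h1 : vb i (R i) / vb i ((R i).erase j) - 1
          = (vb i (R i) - vb i ((R i).erase j)) / vb i ((R i).erase j) := by
        field_simp
      have h2 : (vb i (R i) - vb i ((R i).erase j)) / vb i ((R i).erase j)
          ≤ (vb i (R i) - vb i ((R i).erase j)) / m := by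
        gcongr
      linarith
    calc ∑ j ∈ R i, Real.log (vb i (R i) / vb i ((R i).erase j))
        ≤ ∑ j ∈ R i, (vb i (R i) - vb i ((R i).erase j)) / m :=
          Finset.sum_le_sum hstep
      _ = (∑ j ∈ R i, (v i (R i) - v i ((R i).erase j))) / m := by
          rw [Finset.sum_div]
          apply Finset.sum_congr rfl
          intro j _
          rw [hvb, hvb]; ring_nf
      _ ≤ (v i (R i) - v i ∅) / m := by
          gcongr
          exact aux_sum_erase (v i) (hsubmod i) (R i)
      _ ≤ 1 := by
          rw [hv0 i, sub_zero, div_le_one hmpos]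
          exact le_max_right _ _
  -- addition bound: per agent, the log-gain to reach S k is bounded by single-item gains
  have hadd : ∀ k, Real.log (vb k (S k)) - Real.log (vb k (R k))
      ≤ ∑ j ∈ S k, Real.log (vb k (R k ∪ {j}) / vb k (R k)) := by
    intro k
    set c := vb k (R k) with hc
    have hcpos : 0 < c := hpos k (R k)
    set f : J → ℝ := fun j => (vb k (R k ∪ {j}) - c) / c with hf
    have hfnn : ∀ j ∈ S k, 0 ≤ f j := by
      intro j _
      apply div_nonneg _ hcpos.le
      rw [hc, hvb, hvb]
      have := hmono k (R k) (R k ∪ {j}) Finset.subset_union_left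
      linarith
    have hprod : 1 + ∑ j ∈ S k, f j ≤ ∏ j ∈ S k, (1 + f j) :=
      aux_prod_one_add (S k) f hfnn
    have hsumf : (vb k (R k ∪ S k) - c) / c ≤ ∑ j ∈ S k, f j := by
      have hus := aux_union_sum (v k) (hsubmod k) (R k) (S k)
      have e : ∑ j ∈ S k, f j = (∑ j ∈ S k, (v k (R k ∪ {j}) - v k (R k))) / c := by
        rw [Finset.sum_div]
        apply Finset.sum_congr rfl
        intro j _
        show (vb k (R k ∪ {j}) - c) / c = _
        rw [hc, hvb, hvb]
        ring_nf
      rw [e]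
      have e2 : vb k (R k ∪ S k) - c = v k (R k ∪ S k) - v k (R k) := by
        rw [hc, hvb, hvb]; ring
      rw [e2]
      gcongr
    have hmonoS : vb k (S k) ≤ vb k (R k ∪ S k) := by
      rw [hvb, hvb]
      have := hmono k (S k) (R k ∪ S k) Finset.subset_union_right
      linarith
    have hkey : vb k (S k) / c ≤ ∏ j ∈ S k, (1 + f j) := by
      have : vb k (S k) / c = 1 + (vb k (S k) - c) / c := by field_simp; ring
      rw [this]
      calc 1 + (vb k (S k) - c) / c ≤ 1 + (vb k (R k ∪ S k) - c) / c := by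
            gcongr
        _ ≤ 1 + ∑ j ∈ S k, f j := by gcongr
        _ ≤ _ := hprod
    have hprodpos : 0 < ∏ j ∈ S k, (1 + f j) :=
      lt_of_lt_of_le (div_pos (hpos k (S k)) hcpos) hkey
    have hlog1 : Real.log (vb k (S k) / c) ≤ Real.log (∏ j ∈ S k, (1 + f j)) :=
      Real.log_le_log (div_pos (hpos k (S k)) hcpos) hkey
    have e2 : ∀ j ∈ S k, (1 : ℝ) + f j = vb k (R k ∪ {j}) / c := by
      intro j _
      rw [hf]
      field_simp
      ring
    rw [Real.log_div (hpos k (S k)).ne' hcpos.ne'] at hlog1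
    calc Real.log (vb k (S k)) - Real.log (vb k (R k))
        ≤ Real.log (∏ j ∈ S k, (1 + f j)) := hlog1
      _ = ∑ j ∈ S k, Real.log (1 + f j) := by
          apply Real.log_prod
          intro j hj
          rw [e2 j hj]
          exact (div_pos (hpos k (R k ∪ {j})) hcpos).ne'
      _ = ∑ j ∈ S k, Real.log (vb k (R k ∪ {j}) / vb k (R k)) := by
          apply Finset.sum_congr rfl
          intro j hj
          rw [e2 j hj]
  -- local optimality in log form
  have hloclog : ∀ i k, i ≠ k → ∀ j ∈ R i,
      w k * Real.log (vb k (R k ∪ {j}) / vb k (R k))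
        ≤ w i * Real.log (vb i (R i) / vb i ((R i).erase j)) := by
    intro i k hik j hj
    have hx : (0:ℝ) < vb i ((R i).erase j) / vb i (R i) :=
      div_pos (hpos i _) (hpos i _)
    have hy : (0:ℝ) < vb k (R k ∪ {j}) / vb k (R k) :=
      div_pos (hpos k _) (hpos k _)
    have h := hloc i k hik j hj
    have hppos : (0:ℝ) < (vb i ((R i).erase j) / vb i (R i)) ^ (w i) *
        (vb k (R k ∪ {j}) / vb k (R k)) ^ (w k) :=
      mul_pos (Real.rpow_pos_of_pos hx _) (Real.rpow_pos_of_pos hy _)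
    have hlog := Real.log_le_log hppos h
    rw [Real.log_mul (Real.rpow_pos_of_pos hx _).ne' (Real.rpow_pos_of_pos hy _).ne',
      Real.log_rpow hx, Real.log_rpow hy, Real.log_one] at hlog
    have : Real.log (vb i (R i) / vb i ((R i).erase j))
        = - Real.log (vb i ((R i).erase j) / vb i (R i)) := by
      rw [Real.log_div (hpos i _).ne' (hpos i _).ne',
        Real.log_div (hpos i _).ne' (hpos i _).ne']
      ring
    rw [this]
    linarith
  -- owners
  have hownR : ∀ j : J, ∃ i, j ∈ R i := by
    intro j
    have : j ∈ Finset.univ.biUnion R := by rw [hRcover]; exact Finset.mem_univ j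
    simpa using this
  choose o ho using hownR
  have houniq : ∀ j i, j ∈ R i → o j = i := by
    intro j i hji
    by_contra h
    exact (Finset.disjoint_left.mp (hRdisj (o j) i h)) (ho j) hji
  set G : J → ℝ := fun j =>
    w (o j) * Real.log (vb (o j) (R (o j)) / vb (o j) ((R (o j)).erase j)) with hG
  have hGnn : ∀ j, 0 ≤ G j := by
    intro j
    apply mul_nonneg (hw (o j)).le
    apply Real.log_nonneg
    rw [le_div_iff₀ (hpos _ _), one_mul]
    rw [hvb, hvb]
    have := hmono (o j) ((R (o j)).erase j) (R (o j)) (Finset.erase_subset j _)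
    linarith
  -- pointwise bound for items in S k
  have hpt : ∀ k, ∀ j ∈ S k,
      w k * Real.log (vb k (R k ∪ {j}) / vb k (R k)) ≤ G j := by
    intro k j hj
    by_cases hjk : j ∈ R k
    · have hRkj : R k ∪ {j} = R k := by
        rw [Finset.union_comm, ← Finset.insert_eq, Finset.insert_eq_self.mpr hjk]
      rw [hRkj, div_self (hpos k (R k)).ne', Real.log_one, mul_zero]
      exact hGnn j
    · have hok : o j ≠ k := by
        intro h; exact hjk (h ▸ ho j)
      exact hloclog (o j) k hok j (ho j)
  -- sum over the S-partition
  have hsum1 : ∑ k, ∑ j ∈ S k, w k * Real.log (vb k (R k ∪ {j}) / vb k (R k))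
      ≤ ∑ j : J, G j := by
    have e : ∑ j : J, G j = ∑ k, ∑ j ∈ S k, G j := by
      rw [← hScover, Finset.sum_biUnion]
      intro i _ k _ hik
      exact hSdisj i k hik
    rw [e]
    apply Finset.sum_le_sum
    intro k _
    exact Finset.sum_le_sum (hpt k)
  -- sum over the R-partition
  have hsum2 : ∑ j : J, G j ≤ 1 := by
    have e : ∑ j : J, G j = ∑ i, ∑ j ∈ R i, G j := by
      rw [← hRcover, Finset.sum_biUnion]
      intro i _ k _ hik
      exact hRdisj i k hik
    rw [e]
    calc ∑ i, ∑ j ∈ R i, G j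
        = ∑ i, w i * ∑ j ∈ R i, Real.log (vb i (R i) / vb i ((R i).erase j)) := by
          apply Finset.sum_congr rfl
          intro i _
          rw [Finset.mul_sum]
          apply Finset.sum_congr rfl
          intro j hj
          rw [hG]
          simp only [houniq j i hj]
      _ ≤ ∑ i, w i * 1 := by
          apply Finset.sum_le_sum
          intro i _
          exact mul_le_mul_of_nonneg_left (hrem i) (hw i).le
      _ = ∑ i, w i := by simp
      _ ≤ 1 := hwsum
  -- assemble the main log inequality
  have hmain : ∑ k, w k * Real.log (vb k (S k))
      ≤ 1 + ∑ k, w k * Real.log (vb k (R k)) := by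
    have h1 : ∑ k, w k * (Real.log (vb k (S k)) - Real.log (vb k (R k)))
        ≤ ∑ k, ∑ j ∈ S k, w k * Real.log (vb k (R k ∪ {j}) / vb k (R k)) := by
      apply Finset.sum_le_sum
      intro k _
      rw [← Finset.mul_sum]
      exact mul_le_mul_of_nonneg_left (hadd k) (hw k).le
    have h2 := le_trans h1 (le_trans hsum1 hsum2)
    have : ∑ k, w k * (Real.log (vb k (S k)) - Real.log (vb k (R k)))
        = ∑ k, w k * Real.log (vb k (S k)) - ∑ k, w k * Real.log (vb k (R k)) := by
      rw [← Finset.sum_sub_distrib]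
      apply Finset.sum_congr rfl
      intro k _
      ring
    rw [this] at h2
    linarith
  -- convert to products via exp
  have hprodS : ∏ i, vb i (S i) ^ (w i) = Real.exp (∑ i, w i * Real.log (vb i (S i))) := by
    rw [Real.exp_sum]
    apply Finset.prod_congr rfl
    intro i _
    rw [Real.rpow_def_of_pos (hpos i (S i)), mul_comm]
  have hprodR : ∏ i, vb i (R i) ^ (w i) = Real.exp (∑ i, w i * Real.log (vb i (R i))) := by
    rw [Real.exp_sum]
    apply Finset.prod_congr rfl
    intro i _
    rw [Real.rpow_def_of_pos (hpos i (R i)), mul_comm]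
  rw [hprodS, hprodR]
  rw [div_mul_eq_mul_div, one_mul, div_le_iff₀ (Real.exp_pos 1)]
  rw [← Real.exp_add]
  apply Real.exp_le_exp.mpr
  linarith
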